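/- Let A and B be real n×n matrices. Then the determinant of the 2n×2n real block matrix [[A, B], [-B, A]] equals |det(A + iB)|², where A + iB is viewed as a complex n×n matrix. In particular, this determinant is nonnegative, and it is strictly positive when A + iB is invertible. -/

import Mathlib

open Matrix Complex

lemma aux_det_blocks (n : ℕ) (A B : Matrix (Fin n) (Fin n) ℝ) :
    ((Matrix.fromBlocks A B (-B) A).det : ℂ) =
      Complex.normSq ((Matrix.of fun i j => (A i j : ℂ) + Complex.I * (B i j : ℂ)).det) := by
  set C : Matrix (Fin n) (Fin n) ℂ :=
    Matrix.of fun i j => (A i j : ℂ) + Complex.I * (B i j : ℂ) with hC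
  set A' : Matrix (Fin n) (Fin n) ℂ := A.map Complex.ofReal with hA'
  set B' : Matrix (Fin n) (Fin n) ℂ := B.map Complex.ofReal with hB'
  have hCsum : C = A' + Complex.I • B' := by
    ext i j
    simp [hC, hA', hB', Matrix.map_apply, Matrix.add_apply, Matrix.smul_apply]
  set M : Matrix (Fin n ⊕ Fin n) (Fin n ⊕ Fin n) ℂ :=
    (Matrix.fromBlocks A B (-B) A).map Complex.ofReal with hM
  have hdetM : (Matrix.fromBlocks A B (-B) A).det = (Complex.ofRealHom : ℝ →+* ℂ)
      (Matrix.fromBlocks A B (-B) A).det := rfl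
  have hmap : M = Matrix.fromBlocks A' B' (-B') A' := by
    ext (i | i) (j | j) <;>
      simp [hM, hA', hB', Matrix.map_apply, Matrix.fromBlocks, Matrix.neg_apply]
  set P : Matrix (Fin n ⊕ Fin n) (Fin n ⊕ Fin n) ℂ :=
    Matrix.fromBlocks 1 (Complex.I • 1) 0 1 with hP
  set Q : Matrix (Fin n ⊕ Fin n) (Fin n ⊕ Fin n) ℂ :=
    Matrix.fromBlocks 1 (-(Complex.I • 1)) 0 1 with hQ
  have hPdet : P.det = 1 := by simp [hP, Matrix.det_fromBlocks_zero₂₁]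
  have hQdet : Q.det = 1 := by simp [hQ, Matrix.det_fromBlocks_zero₂₁]
  have hprod : P * M * Q =
      Matrix.fromBlocks (A' - Complex.I • B') 0 (-B') (A' + Complex.I • B') := by
    rw [hmap, hP, hQ, Matrix.fromBlocks_multiply, Matrix.fromBlocks_multiply]
    ext (i | i) (j | j) <;>
      simp [Matrix.fromBlocks, Matrix.add_apply, Matrix.sub_apply, Matrix.smul_apply,
        Matrix.neg_apply, Matrix.mul_apply, Finset.mul_sum, Finset.sum_add_distrib] <;>
      ring_nf <;>
      simp [Complex.I_sq, mul_comm, mul_left_comm] <;> ring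
  have hdet2 : M.det = (A' - Complex.I • B').det * (A' + Complex.I • B').det := by
    have := congrArg Matrix.det hprod
    rwa [Matrix.det_mul, Matrix.det_mul, hPdet, hQdet, one_mul, mul_one,
      Matrix.det_fromBlocks_zero₁₂] at this
  have hmatconj : A' - Complex.I • B' = (starRingEnd ℂ).mapMatrix C := by
    ext i j
    simp [hC, hA', hB', Matrix.map_apply, Matrix.sub_apply, Matrix.smul_apply, mul_comm, sub_eq_add_neg]
  have hconj : (A' - Complex.I • B').det = (starRingEnd ℂ) C.det := by
    rw [hmatconj, RingHom.map_det]
  have hMdet : ((Matrix.fromBlocks A B (-B) A).det : ℂ) = M.det := by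
    rw [hM]
    have h2 := RingHom.map_det Complex.ofRealHom (Matrix.fromBlocks A B (-B) A)
    rw [RingHom.mapMatrix_apply] at h2
    rw [show (Complex.ofReal : ℝ → ℂ) = ⇑Complex.ofRealHom from rfl]
    exact h2
  rw [hMdet, hdet2, hconj, ← hCsum, Complex.normSq_eq_conj_mul_self]

theorem stmt_0 (n : ℕ) (A B : Matrix (Fin n) (Fin n) ℝ) :
    (Matrix.fromBlocks A B (-B) A).det =
      ‖(Matrix.of fun i j => (A i j : ℂ) + Complex.I * (B i j : ℂ)).det‖ ^ 2 ∧
    0 ≤ (Matrix.fromBlocks A B (-B) A).det ∧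
    (IsUnit (Matrix.of fun i j => (A i j : ℂ) + Complex.I * (B i j : ℂ)) →
      0 < (Matrix.fromBlocks A B (-B) A).det) := by
  have h := aux_det_blocks n A B
  set C : Matrix (Fin n) (Fin n) ℂ :=
    Matrix.of fun i j => (A i j : ℂ) + Complex.I * (B i j : ℂ)
  have habs : (Matrix.fromBlocks A B (-B) A).det = ‖C.det‖ ^ 2 := by
    have := h
    rw [← Complex.sq_norm] at this
    exact_mod_cast this
  refine ⟨habs, habs ▸ sq_nonneg _, fun hu => ?_⟩
  rw [habs]
  have : C.det ≠ 0 := by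
    intro h0
    exact (Matrix.isUnit_iff_isUnit_det C).mp hu |>.ne_zero h0
  have habs0 : ‖C.det‖ ≠ 0 := by simpa using this
  exact pow_pos (lt_of_le_of_ne (norm_nonneg _) (Ne.symm habs0)) 2
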